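/- arXiv:2501.05364 — 2 statements merged into one kernel-verified Lean document; each statement's English description precedes it below -/
import Mathlib

section
/- Let S be a closed set of the hypercube Q_x, let n satisfy ⌊n/2⌋ ≤ x < n, and define C ⊆ V(Q_n) as the union of A = {0^(n-x) s : s ∈ S} and B = {1^(n-x) s : s ∈ S}, where juxtaposition denotes concatenation of binary strings. Then C is a closed set of Q_n. -/
/-- A nonempty set `S` of vertices of the hypercube `Q_m` (whose graph distance is
Hamming distance) is *closed* if for every `u ∈ S` and every vertex `v` there is
`y ∈ S` with `dist(u,v) = dist(u,y)`. -/
def QClosed (m : ℕ) (S : Set (Fin m → Bool)) : Prop :=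
  S.Nonempty ∧ ∀ u ∈ S, ∀ v : Fin m → Bool, ∃ y ∈ S, hammingDist u v = hammingDist u y

lemma card_filter_lt {n k : ℕ} (hkn : k ≤ n) :
    (Finset.univ.filter fun i : Fin n => i.val < k).card = k := by
  rcases Nat.eq_zero_or_pos k with h | h
  · subst h; simp
  have := Finset.card_nbij' (s := Finset.univ.filter fun i : Fin n => i.val < k)
    (t := (Finset.univ : Finset (Fin k)))
    (i := fun i => ⟨i.val % k, Nat.mod_lt _ h⟩)
    (j := fun j => ⟨j.val, by omega⟩)
    (by intro a ha; simp)
    (by intro b hb; simp [b.isLt])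
    (by intro a ha; simp at ha; ext; simp [Nat.mod_eq_of_lt ha])
    (by intro b hb; ext; simp [Nat.mod_eq_of_lt b.isLt])
  simpa using this

lemma ham_split {n k x : ℕ} (hkx : k + x = n) (u y : Fin n → Bool) :
    hammingDist u y =
      (Finset.univ.filter fun i : Fin n => (u i ≠ y i) ∧ i.val < k).card +
      hammingDist (fun j : Fin x => u ⟨k + j.val, by omega⟩)
        (fun j : Fin x => y ⟨k + j.val, by omega⟩) := by
  classical
  rw [show hammingDist u y = (Finset.univ.filter fun i : Fin n => u i ≠ y i).card from rfl]
  rw [← Finset.card_filter_add_card_filter_not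
    (p := fun i : Fin n => i.val < k) (s := Finset.univ.filter fun i : Fin n => u i ≠ y i)]
  congr 1
  · rw [Finset.filter_filter]
  · rw [Finset.filter_filter]
    rw [show hammingDist (fun j : Fin x => u ⟨k + j.val, by omega⟩)
        (fun j : Fin x => y ⟨k + j.val, by omega⟩) =
        (Finset.univ.filter fun j : Fin x =>
          u ⟨k + j.val, by omega⟩ ≠ y ⟨k + j.val, by omega⟩).card from rfl]
    refine Finset.card_bij' (i := fun a ha => ⟨a.val - k, by
        simp only [Finset.mem_filter, Finset.mem_univ, true_and, not_lt] at ha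
        omega⟩)
      (j := fun b hb => ⟨k + b.val, by omega⟩) ?_ ?_ ?_ ?_
    · intro a ha
      simp only [Finset.mem_filter, Finset.mem_univ, true_and, not_lt] at ha ⊢
      have : (⟨k + (a.val - k), by omega⟩ : Fin n) = a := by
        ext; simp; omega
      rw [this]; exact ha.1
    · intro b hb
      simp only [Finset.mem_filter, Finset.mem_univ, true_and, not_lt] at hb ⊢
      exact ⟨hb, by omega⟩
    · intro a ha
      simp only [Finset.mem_filter, Finset.mem_univ, true_and, not_lt] at ha
      ext; simp; omega
    · intro b hb; ext; simp

lemma exists_dist {x : ℕ} {S : Set (Fin x → Bool)} (hS : QClosed x S)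
    {s : Fin x → Bool} (hs : s ∈ S) {e : ℕ} (he : e ≤ x) :
    ∃ t ∈ S, hammingDist s t = e := by
  obtain ⟨t, ht, hd⟩ := hS.2 s hs (fun i => if i.val < e then !(s i) else s i)
  refine ⟨t, ht, ?_⟩
  rw [← hd]
  rw [show hammingDist s (fun i => if i.val < e then !(s i) else s i) =
    (Finset.univ.filter fun i : Fin x =>
      s i ≠ (if i.val < e then !(s i) else s i)).card from rfl]
  rw [show (Finset.univ.filter fun i : Fin x =>
      s i ≠ (if i.val < e then !(s i) else s i)) =
      (Finset.univ.filter fun i : Fin x => i.val < e) from ?_]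
  · exact card_filter_lt he
  · apply Finset.filter_congr
    intro i _
    by_cases h : i.val < e <;> simp [h]

theorem doubling_closed (x n : ℕ) (hx1 : n / 2 ≤ x) (hx2 : x < n)
    (S : Set (Fin x → Bool)) (hS : QClosed x S) :
    QClosed n {v : Fin n → Bool | ∃ s ∈ S,
      (∀ j : Fin x, v ⟨n - x + j.val, by have := j.isLt; omega⟩ = s j) ∧
      ((∀ i : Fin n, i.val < n - x → v i = false) ∨
       (∀ i : Fin n, i.val < n - x → v i = true))} := by
  classical
  obtain ⟨s0, hs0⟩ := hS.1
  set k := n - x with hk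
  have hkx : k + x = n := by omega
  constructor
  · refine ⟨fun i => if h : i.val < k then false else s0 ⟨i.val - k, by omega⟩,
      s0, hs0, fun j => ?_, Or.inl fun i hi => by simp [show i.val < k from hi]⟩
    have h1 : ¬ (k + j.val < k) := by omega
    simp only [h1, dif_neg, not_false_iff]
    congr 1
    rw [dif_neg (by omega)]; exact congrArg _ (Fin.ext (by show n - x + j.val - k = j.val; omega))
  · rintro u ⟨s, hsS, hsuf, hpre⟩ v
    set d := hammingDist u v with hd
    have hdn : d ≤ n := by
      have := hammingDist_le_card_fintype (x := u) (y := v)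
      simpa using this
    by_cases hcase : d ≤ x
    · obtain ⟨t, htS, htd⟩ := exists_dist hS hsS hcase
      refine ⟨fun i => if h : i.val < k then u i else t ⟨i.val - k, by omega⟩,
        ⟨t, htS, fun j => ?_, ?_⟩, ?_⟩
      · have h1 : ¬ (k + j.val < k) := by omega
        simp only [h1, dif_neg, not_false_iff]
        congr 1
        rw [dif_neg (by omega)]; exact congrArg _ (Fin.ext (by show n - x + j.val - k = j.val; omega))
      · rcases hpre with hp | hp
        · exact Or.inl fun i hi => by simp [show i.val < k from hi, hp i hi]
        · exact Or.inr fun i hi => by simp [show i.val < k from hi, hp i hi]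
      · rw [ham_split hkx]
        have e1 : (Finset.univ.filter fun i : Fin n =>
            (u i ≠ (if h : i.val < k then u i else t ⟨i.val - k, by omega⟩)) ∧ i.val < k)
            = ∅ := by
          ext i; simp only [Finset.mem_filter, Finset.mem_univ, true_and,
            Finset.notMem_empty, iff_false]
          rintro ⟨h1, h2⟩
          simp [h2] at h1
        rw [e1]
        simp only [Finset.card_empty, zero_add]
        rw [← htd]
        congr 1
        · ext j; rw [hsuf j]
        · ext j
          have h1 : ¬ (k + j.val < k) := by omega
          simp only [h1, dif_neg, not_false_iff]
          congr 1
          ext; simp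
    · push_neg at hcase
      have h1 : k ≤ d := by omega
      have h2 : d - k ≤ x := by omega
      obtain ⟨t, htS, htd⟩ := exists_dist hS hsS h2
      refine ⟨fun i => if h : i.val < k then !(u i) else t ⟨i.val - k, by omega⟩,
        ⟨t, htS, fun j => ?_, ?_⟩, ?_⟩
      · have h1 : ¬ (k + j.val < k) := by omega
        simp only [h1, dif_neg, not_false_iff]
        congr 1
        rw [dif_neg (by omega)]; exact congrArg _ (Fin.ext (by show n - x + j.val - k = j.val; omega))
      · rcases hpre with hp | hp
        · exact Or.inr fun i hi => by simp [show i.val < k from hi, hp i hi]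
        · exact Or.inl fun i hi => by simp [show i.val < k from hi, hp i hi]
      · rw [ham_split hkx]
        have e1 : (Finset.univ.filter fun i : Fin n =>
            (u i ≠ (if h : i.val < k then !(u i) else t ⟨i.val - k, by omega⟩)) ∧ i.val < k)
            = Finset.univ.filter fun i : Fin n => i.val < k := by
          apply Finset.filter_congr
          intro i _
          by_cases h : i.val < k <;> simp [h]
        rw [e1, card_filter_lt (by omega)]
        have e2 : hammingDist (fun j : Fin x => u ⟨k + j.val, by omega⟩)
            (fun j : Fin x => (fun i : Fin n =>
              if h : i.val < k then !(u i) else t ⟨i.val - k, by omega⟩) ⟨k + j.val, by omega⟩)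
            = d - k := by
          rw [← htd]
          congr 1
          · ext j; rw [hsuf j]
          · ext j
            have h1 : ¬ (k + j.val < k) := by omega
            simp only [h1, dif_neg, not_false_iff]
            congr 1
            ext; simp
        rw [e2]
        omega
end

section
/- In the cuttlefish graph CF_n (n ≥ 5), the set A = {v_1, ..., v_{⌊n/2⌋−1}} ∪ {u_1, ..., u_{⌊n/2⌋+1}} is a closed set of cardinality 2⌊n/2⌋. -/
/-- Vertices of the cuttlefish graph `CF_n`: `Sum.inl i` is the cycle vertex
`u_{i+1}` (for `i : Fin n`), `Sum.inr (Sum.inl j)` is the path vertex `v_{j+1}` and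
`Sum.inr (Sum.inr j)` is the path vertex `w_{j+1}` (for `j : Fin (n/2 - 1)`). -/
abbrev CFV (n : ℕ) := Fin n ⊕ (Fin (n / 2 - 1) ⊕ Fin (n / 2 - 1))

/-- The generating relation for the edges of `CF_n`: cycle edges `u_i u_{i+1 mod n}`,
pendant edges `u_1 v_1` and `u_2 w_1`, and path edges `v_j v_{j+1}`, `w_j w_{j+1}`. -/
def cfRel (n : ℕ) : CFV n → CFV n → Prop
  | Sum.inl i, Sum.inl j => (i.val + 1) % n = j.val
  | Sum.inl i, Sum.inr (Sum.inl j) => i.val = 0 ∧ j.val = 0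
  | Sum.inl i, Sum.inr (Sum.inr j) => i.val = 1 ∧ j.val = 0
  | Sum.inr (Sum.inl i), Sum.inr (Sum.inl j) => j.val = i.val + 1
  | Sum.inr (Sum.inr i), Sum.inr (Sum.inr j) => j.val = i.val + 1
  | _, _ => False

/-- The cuttlefish graph `CF_n`. -/
def CF (n : ℕ) : SimpleGraph (CFV n) := SimpleGraph.fromRel (cfRel n)

/-- A nonempty set `U` of vertices of a graph `G` is *closed* if for every `u ∈ U`
and every vertex `x` there is `y ∈ U` with `dist(u,x) = dist(u,y)`. -/
def ClosedSet {V : Type*} (G : SimpleGraph V) (U : Set V) : Prop :=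
  U.Nonempty ∧ ∀ u ∈ U, ∀ x : V, ∃ y ∈ U, G.dist u x = G.dist u y

namespace CFProof

/-- cycle distance -/
def cyc (n a b : ℕ) : ℕ := min (max a b - min a b) (n - (max a b - min a b))

/-- the distance function of `CF n` -/
def D (n : ℕ) : CFV n → CFV n → ℕ
  | Sum.inl a, Sum.inl b => cyc n a.val b.val
  | Sum.inl a, Sum.inr (Sum.inl k) => cyc n a.val 0 + 1 + k.val
  | Sum.inl a, Sum.inr (Sum.inr k) => cyc n a.val 1 + 1 + k.val
  | Sum.inr (Sum.inl j), Sum.inl b => cyc n 0 b.val + 1 + j.val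
  | Sum.inr (Sum.inl j), Sum.inr (Sum.inl k) => max j.val k.val - min j.val k.val
  | Sum.inr (Sum.inl j), Sum.inr (Sum.inr k) => j.val + k.val + 3
  | Sum.inr (Sum.inr j), Sum.inl b => cyc n 1 b.val + 1 + j.val
  | Sum.inr (Sum.inr j), Sum.inr (Sum.inl k) => j.val + k.val + 3
  | Sum.inr (Sum.inr j), Sum.inr (Sum.inr k) => max j.val k.val - min j.val k.val

variable {n : ℕ}

lemma lip (hn : 5 ≤ n) {p q : CFV n} (h : cfRel n p q) (x : CFV n) :
    D n x q ≤ D n x p + 1 ∧ D n x p ≤ D n x q + 1 := by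
  rcases p with a | j | j <;> rcases q with b | k | k <;>
    simp only [cfRel] at h
  · -- cycle edge
    have ha := a.isLt; have hb := b.isLt
    have hab : b.val = a.val + 1 ∨ (a.val + 1 = n ∧ b.val = 0) := by
      rcases Nat.lt_or_ge (a.val + 1) n with hl | hl
      · rw [Nat.mod_eq_of_lt hl] at h; omega
      · have he : a.val + 1 = n := by omega
        rw [he, Nat.mod_self] at h; omega
    rcases x with c | m | m <;> simp only [D, cyc] <;>
      [have hc := c.isLt; have hm := m.isLt; have hm := m.isLt] <;> omega
  · -- pendant v edge
    obtain ⟨h1, h2⟩ := h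
    rcases x with c | m | m <;> simp only [D, cyc] <;>
      [have hc := c.isLt; have hm := m.isLt; have hm := m.isLt] <;> omega
  · -- pendant w edge
    obtain ⟨h1, h2⟩ := h
    rcases x with c | m | m <;> simp only [D, cyc] <;>
      [have hc := c.isLt; have hm := m.isLt; have hm := m.isLt] <;> omega
  · -- v path edge
    have hj := j.isLt; have hk := k.isLt
    rcases x with c | m | m <;> simp only [D, cyc] <;>
      [have hc := c.isLt; have hm := m.isLt; have hm := m.isLt] <;> omega
  · -- w path edge
    have hj := j.isLt; have hk := k.isLt
    rcases x with c | m | m <;> simp only [D, cyc] <;>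
      [have hc := c.isLt; have hm := m.isLt; have hm := m.isLt] <;> omega

lemma D_self (x : CFV n) : D n x x = 0 := by
  rcases x with a | j | j <;> simp [D, cyc]

lemma D_comm (x y : CFV n) : D n x y = D n y x := by
  rcases x with a | j | j <;> rcases y with b | k | k <;> simp only [D, cyc] <;> omega

lemma walk_bound {V : Type*} {G : SimpleGraph V} (f : V → ℕ)
    (hf : ∀ p q, G.Adj p q → f q ≤ f p + 1) :
    ∀ {a b : V} (W : G.Walk a b), f b ≤ f a + W.length := by
  intro a b W
  induction W with
  | nil => simp
  | cons h W ih =>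
    have := hf _ _ h
    simp only [SimpleGraph.Walk.length_cons]
    omega

lemma adj_cycle (hn : 5 ≤ n) (a b : Fin n) (h : (a.val + 1) % n = b.val) :
    (CF n).Adj (.inl a) (.inl b) := by
  rw [CF, SimpleGraph.fromRel_adj]
  refine ⟨fun he => ?_, Or.inl h⟩
  have ha := a.isLt
  obtain rfl : a = b := by simpa using he
  rcases Nat.lt_or_ge (a.val + 1) n with hl | hl
  · rw [Nat.mod_eq_of_lt hl] at h; omega
  · have he2 : a.val + 1 = n := by omega
    rw [he2, Nat.mod_self] at h; omega

lemma ex_walk_cyc (hn : 5 ≤ n) :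
    ∀ (k : ℕ) (a b : Fin n), b.val = (a.val + k) % n →
      ∃ W : (CF n).Walk (.inl a) (.inl b), W.length = k := by
  intro k a
  induction k with
  | zero =>
    intro b h
    have : b = a := Fin.ext (by rw [h, Nat.add_zero, Nat.mod_eq_of_lt a.isLt])
    subst this
    exact ⟨.nil, rfl⟩
  | succ k ih =>
    intro b h
    set c : Fin n := ⟨(a.val + k) % n, Nat.mod_lt _ (by omega)⟩ with hc
    obtain ⟨W, hW⟩ := ih c rfl
    have hadj : (CF n).Adj (.inl c) (.inl b) := by
      apply adj_cycle hn
      show ((a.val + k) % n + 1) % n = b.val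
      rw [Nat.mod_add_mod, h, Nat.add_assoc]
    exact ⟨W.concat hadj, by rw [SimpleGraph.Walk.length_concat, hW]⟩

lemma ex_walk_v (hn : 5 ≤ n) :
    ∀ (m : ℕ) (a : Fin n) (_ : a.val = 0) (j : Fin (n / 2 - 1)) (_ : j.val = m),
      ∃ W : (CF n).Walk (.inl a) (.inr (.inl j)), W.length = m + 1 := by
  intro m
  induction m with
  | zero =>
    intro a ha j hj
    have hadj : (CF n).Adj (.inl a) (.inr (.inl j)) := by
      rw [CF, SimpleGraph.fromRel_adj]
      exact ⟨by simp, Or.inl ⟨ha, hj⟩⟩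
    exact ⟨.cons hadj .nil, rfl⟩
  | succ m ih =>
    intro a ha j hj
    have hm : m < n / 2 - 1 := by have := j.isLt; omega
    obtain ⟨W, hW⟩ := ih a ha ⟨m, hm⟩ rfl
    have hadj : (CF n).Adj (.inr (.inl (⟨m, hm⟩ : Fin (n / 2 - 1)))) (.inr (.inl j)) := by
      rw [CF, SimpleGraph.fromRel_adj]
      refine ⟨fun he => ?_, Or.inl (by simpa [cfRel] using hj)⟩
      have : m = j.val := congrArg Fin.val (by simpa using he)
      omega
    exact ⟨W.concat hadj, by rw [SimpleGraph.Walk.length_concat, hW]⟩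

lemma ex_walk_w (hn : 5 ≤ n) :
    ∀ (m : ℕ) (a : Fin n) (_ : a.val = 1) (j : Fin (n / 2 - 1)) (_ : j.val = m),
      ∃ W : (CF n).Walk (.inl a) (.inr (.inr j)), W.length = m + 1 := by
  intro m
  induction m with
  | zero =>
    intro a ha j hj
    have hadj : (CF n).Adj (.inl a) (.inr (.inr j)) := by
      rw [CF, SimpleGraph.fromRel_adj]
      exact ⟨by simp, Or.inl ⟨ha, hj⟩⟩
    exact ⟨.cons hadj .nil, rfl⟩
  | succ m ih =>
    intro a ha j hj
    have hm : m < n / 2 - 1 := by have := j.isLt; omega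
    obtain ⟨W, hW⟩ := ih a ha ⟨m, hm⟩ rfl
    have hadj : (CF n).Adj (.inr (.inr (⟨m, hm⟩ : Fin (n / 2 - 1)))) (.inr (.inr j)) := by
      rw [CF, SimpleGraph.fromRel_adj]
      refine ⟨fun he => ?_, Or.inl (by simpa [cfRel] using hj)⟩
      have : m = j.val := congrArg Fin.val (by simpa using he)
      omega
    exact ⟨W.concat hadj, by rw [SimpleGraph.Walk.length_concat, hW]⟩

lemma ex_walk_vv (hn : 5 ≤ n) :
    ∀ (m : ℕ) (j k : Fin (n / 2 - 1)), k.val = j.val + m →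
      ∃ W : (CF n).Walk (.inr (.inl j)) (.inr (.inl k)), W.length = m := by
  intro m j
  induction m with
  | zero =>
    intro k h
    have : k = j := Fin.ext (by omega)
    subst this
    exact ⟨.nil, rfl⟩
  | succ m ih =>
    intro k h
    have hm : j.val + m < n / 2 - 1 := by have := k.isLt; omega
    obtain ⟨W, hW⟩ := ih ⟨j.val + m, hm⟩ rfl
    have hadj : (CF n).Adj (.inr (.inl (⟨j.val + m, hm⟩ : Fin (n / 2 - 1)))) (.inr (.inl k)) := by
      rw [CF, SimpleGraph.fromRel_adj]
      refine ⟨fun he => ?_, Or.inl (by simpa [cfRel] using (by omega : k.val = (j.val + m) + 1))⟩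
      have : j.val + m = k.val := congrArg Fin.val (by simpa using he)
      omega
    exact ⟨W.concat hadj, by rw [SimpleGraph.Walk.length_concat, hW]⟩

lemma ex_walk_ww (hn : 5 ≤ n) :
    ∀ (m : ℕ) (j k : Fin (n / 2 - 1)), k.val = j.val + m →
      ∃ W : (CF n).Walk (.inr (.inr j)) (.inr (.inr k)), W.length = m := by
  intro m j
  induction m with
  | zero =>
    intro k h
    have : k = j := Fin.ext (by omega)
    subst this
    exact ⟨.nil, rfl⟩
  | succ m ih =>
    intro k h
    have hm : j.val + m < n / 2 - 1 := by have := k.isLt; omega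
    obtain ⟨W, hW⟩ := ih ⟨j.val + m, hm⟩ rfl
    have hadj : (CF n).Adj (.inr (.inr (⟨j.val + m, hm⟩ : Fin (n / 2 - 1)))) (.inr (.inr k)) := by
      rw [CF, SimpleGraph.fromRel_adj]
      refine ⟨fun he => ?_, Or.inl (by simpa [cfRel] using (by omega : k.val = (j.val + m) + 1))⟩
      have : j.val + m = k.val := congrArg Fin.val (by simpa using he)
      omega
    exact ⟨W.concat hadj, by rw [SimpleGraph.Walk.length_concat, hW]⟩

/-- upper bound between cycle vertices -/
lemma dist_uu (hn : 5 ≤ n) (a b : Fin n) :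
    (CF n).dist (.inl a) (.inl b) ≤ cyc n a.val b.val := by
  have ha := a.isLt; have hb := b.isLt
  rcases le_total a.val b.val with hle | hle
  · obtain ⟨W1, hW1⟩ := ex_walk_cyc hn (b.val - a.val) a b
      (by rw [show a.val + (b.val - a.val) = b.val by omega, Nat.mod_eq_of_lt hb])
    obtain ⟨W2, hW2⟩ := ex_walk_cyc hn (a.val + n - b.val) b a
      (by rw [show b.val + (a.val + n - b.val) = a.val + n by omega,
            Nat.add_mod_right, Nat.mod_eq_of_lt ha])
    have h1 := SimpleGraph.dist_le W1
    have h2 := SimpleGraph.dist_le W2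
    rw [SimpleGraph.dist_comm] at h2
    simp only [cyc]
    omega
  · obtain ⟨W1, hW1⟩ := ex_walk_cyc hn (a.val - b.val) b a
      (by rw [show b.val + (a.val - b.val) = a.val by omega, Nat.mod_eq_of_lt ha])
    obtain ⟨W2, hW2⟩ := ex_walk_cyc hn (b.val + n - a.val) a b
      (by rw [show a.val + (b.val + n - a.val) = b.val + n by omega,
            Nat.add_mod_right, Nat.mod_eq_of_lt hb])
    have h1 := SimpleGraph.dist_le W1
    have h2 := SimpleGraph.dist_le W2
    rw [SimpleGraph.dist_comm] at h1
    simp only [cyc]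
    omega

lemma reach_all (hn : 5 ≤ n) (x y : CFV n) : (CF n).Reachable x y := by
  set z0 : Fin n := ⟨0, by omega⟩ with hz0d
  set z1 : Fin n := ⟨1, by omega⟩ with hz1d
  have hadj01 : (CF n).Adj (.inl z0) (.inl z1) := by
    apply adj_cycle hn
    show (0 + 1) % n = 1
    rw [Nat.mod_eq_of_lt (by omega)]
  have key : ∀ z : CFV n, (CF n).Reachable (.inl z0) z := by
    intro z
    rcases z with a | j | j
    · obtain ⟨W, _⟩ := ex_walk_cyc hn a.val z0 a
        (by rw [Nat.zero_add, Nat.mod_eq_of_lt a.isLt])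
      exact ⟨W⟩
    · obtain ⟨W, _⟩ := ex_walk_v hn j.val z0 rfl j rfl
      exact ⟨W⟩
    · obtain ⟨W, _⟩ := ex_walk_w hn j.val z1 rfl j rfl
      exact (SimpleGraph.Adj.reachable hadj01).trans ⟨W⟩
  exact (key x).symm.trans (key y)

lemma cf_connected (hn : 5 ≤ n) : (CF n).Connected := by
  have : Nonempty (CFV n) := ⟨Sum.inl ⟨0, by omega⟩⟩
  exact ⟨fun x y => reach_all hn x y⟩

lemma dist_le_D (hn : 5 ≤ n) (x y : CFV n) : (CF n).dist x y ≤ D n x y := by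
  have conn := cf_connected hn
  set z0 : Fin n := ⟨0, by omega⟩ with hz0d
  set z1 : Fin n := ⟨1, by omega⟩ with hz1d
  have hadj01 : (CF n).Adj (.inl z0) (.inl z1) := by
    apply adj_cycle hn
    show (0 + 1) % n = 1
    rw [Nat.mod_eq_of_lt (by omega)]
  have h01 : (CF n).dist (.inl z0) (.inl z1) ≤ 1 := by
    simpa using SimpleGraph.dist_le (SimpleGraph.Walk.cons hadj01 SimpleGraph.Walk.nil)
  have hv : ∀ j : Fin (n / 2 - 1), (CF n).dist (.inl z0) (.inr (.inl j)) ≤ j.val + 1 := by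
    intro j
    obtain ⟨W, hW⟩ := ex_walk_v hn j.val z0 rfl j rfl
    simpa [hW] using SimpleGraph.dist_le W
  have hw : ∀ j : Fin (n / 2 - 1), (CF n).dist (.inl z1) (.inr (.inr j)) ≤ j.val + 1 := by
    intro j
    obtain ⟨W, hW⟩ := ex_walk_w hn j.val z1 rfl j rfl
    simpa [hW] using SimpleGraph.dist_le W
  rcases x with a | j | j <;> rcases y with b | k | k
  · exact dist_uu hn a b
  · -- u to v
    have h1 : (CF n).dist (.inl a) (.inl z0) ≤ cyc n a.val 0 := dist_uu hn a z0
    have h2 := hv k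
    have h3 := conn.dist_triangle (u := (Sum.inl a : CFV n))
      (v := (Sum.inl z0 : CFV n)) (w := (Sum.inr (Sum.inl k) : CFV n))
    simp only [D]
    omega
  · -- u to w
    have h1 : (CF n).dist (.inl a) (.inl z1) ≤ cyc n a.val 1 := dist_uu hn a z1
    have h2 := hw k
    have h3 := conn.dist_triangle (u := (Sum.inl a : CFV n))
      (v := (Sum.inl z1 : CFV n)) (w := (Sum.inr (Sum.inr k) : CFV n))
    simp only [D]
    omega
  · -- v to u
    have h1 : (CF n).dist (.inl z0) (.inl b) ≤ cyc n 0 b.val := dist_uu hn z0 b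
    have h2 := hv j
    rw [SimpleGraph.dist_comm] at h2
    have h3 := conn.dist_triangle (u := (Sum.inr (Sum.inl j) : CFV n))
      (v := (Sum.inl z0 : CFV n)) (w := (Sum.inl b : CFV n))
    simp only [D]
    omega
  · -- v to v
    rcases le_total j.val k.val with hle | hle
    · obtain ⟨W, hW⟩ := ex_walk_vv hn (k.val - j.val) j k (by omega)
      have := SimpleGraph.dist_le W
      simp only [D]
      omega
    · obtain ⟨W, hW⟩ := ex_walk_vv hn (j.val - k.val) k j (by omega)
      have := SimpleGraph.dist_le W
      rw [SimpleGraph.dist_comm] at this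
      simp only [D]
      omega
  · -- v to w
    have h2 := hv j
    rw [SimpleGraph.dist_comm] at h2
    have h4 := hw k
    have h3 := conn.dist_triangle (u := (Sum.inr (Sum.inl j) : CFV n))
      (v := (Sum.inl z0 : CFV n)) (w := (Sum.inr (Sum.inr k) : CFV n))
    have h5 := conn.dist_triangle (u := (Sum.inl z0 : CFV n))
      (v := (Sum.inl z1 : CFV n)) (w := (Sum.inr (Sum.inr k) : CFV n))
    simp only [D]
    omega
  · -- w to u
    have h1 : (CF n).dist (.inl z1) (.inl b) ≤ cyc n 1 b.val := dist_uu hn z1 b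
    have h2 := hw j
    rw [SimpleGraph.dist_comm] at h2
    have h3 := conn.dist_triangle (u := (Sum.inr (Sum.inr j) : CFV n))
      (v := (Sum.inl z1 : CFV n)) (w := (Sum.inl b : CFV n))
    simp only [D]
    omega
  · -- w to v
    have h2 := hw j
    rw [SimpleGraph.dist_comm] at h2
    have h4 := hv k
    have h3 := conn.dist_triangle (u := (Sum.inr (Sum.inr j) : CFV n))
      (v := (Sum.inl z1 : CFV n)) (w := (Sum.inr (Sum.inl k) : CFV n))
    have h5 := conn.dist_triangle (u := (Sum.inl z1 : CFV n))
      (v := (Sum.inl z0 : CFV n)) (w := (Sum.inr (Sum.inl k) : CFV n))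
    rw [SimpleGraph.dist_comm (u := (Sum.inl z0 : CFV n))] at h01
    simp only [D]
    omega
  · -- w to w
    rcases le_total j.val k.val with hle | hle
    · obtain ⟨W, hW⟩ := ex_walk_ww hn (k.val - j.val) j k (by omega)
      have := SimpleGraph.dist_le W
      simp only [D]
      omega
    · obtain ⟨W, hW⟩ := ex_walk_ww hn (j.val - k.val) k j (by omega)
      have := SimpleGraph.dist_le W
      rw [SimpleGraph.dist_comm] at this
      simp only [D]
      omega

lemma cf_dist (hn : 5 ≤ n) (x y : CFV n) : (CF n).dist x y = D n x y := by
  refine le_antisymm (dist_le_D hn x y) ?_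
  obtain ⟨W, hW⟩ := (reach_all hn x y).exists_walk_length_eq_dist
  have hf : ∀ p q : CFV n, (CF n).Adj p q → D n x q ≤ D n x p + 1 := by
    intro p q h
    rw [CF, SimpleGraph.fromRel_adj] at h
    rcases h.2 with h' | h'
    · exact (lip hn h' x).1
    · exact (lip hn h' x).2
  have := walk_bound (D n x) hf W
  rw [hW, D_self] at this
  omega

end CFProof

theorem cuttlefish_closed_set (n : ℕ) (hn : 5 ≤ n) :
    ClosedSet (CF n)
      ((Set.range fun j : Fin (n / 2 - 1) => (Sum.inr (Sum.inl j) : CFV n)) ∪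
        {x : CFV n | ∃ i : Fin n, i.val ≤ n / 2 ∧ x = Sum.inl i}) ∧
    ((Set.range fun j : Fin (n / 2 - 1) => (Sum.inr (Sum.inl j) : CFV n)) ∪
        {x : CFV n | ∃ i : Fin n, i.val ≤ n / 2 ∧ x = Sum.inl i}).ncard = 2 * (n / 2) := by
  have h2 : 2 ≤ n / 2 := by omega
  have memu : ∀ (m : ℕ) (h : m < n), m ≤ n / 2 →
      (Sum.inl (⟨m, h⟩ : Fin n) : CFV n) ∈
        ((Set.range fun j : Fin (n / 2 - 1) => (Sum.inr (Sum.inl j) : CFV n)) ∪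
          {x : CFV n | ∃ i : Fin n, i.val ≤ n / 2 ∧ x = Sum.inl i}) :=
    fun m h hm => Or.inr ⟨⟨m, h⟩, hm, rfl⟩
  have memv : ∀ j : Fin (n / 2 - 1),
      (Sum.inr (Sum.inl j) : CFV n) ∈
        ((Set.range fun j : Fin (n / 2 - 1) => (Sum.inr (Sum.inl j) : CFV n)) ∪
          {x : CFV n | ∃ i : Fin n, i.val ≤ n / 2 ∧ x = Sum.inl i}) :=
    fun j => Or.inl ⟨j, rfl⟩
  constructor
  · constructor
    · exact ⟨Sum.inl ⟨0, by omega⟩, memu 0 (by omega) (by omega)⟩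
    · intro u hu x
      rcases hu with ⟨j, rfl⟩ | ⟨i, hi, rfl⟩
      · -- u = v_j
        have hj := j.isLt
        rcases x with b | k | k
        · -- x = u_b
          have hb := b.isLt
          refine ⟨Sum.inl ⟨min b.val (n - b.val), by omega⟩, memu _ _ (by omega), ?_⟩
          simp only [CFProof.cf_dist hn, CFProof.D, CFProof.cyc, Fin.val_mk]
          omega
        · exact ⟨Sum.inr (Sum.inl k), memv k, rfl⟩
        · -- x = w_k
          have hk := k.isLt
          refine ⟨Sum.inl ⟨k.val + 2, by omega⟩, memu _ _ (by omega), ?_⟩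
          simp only [CFProof.cf_dist hn, CFProof.D, CFProof.cyc, Fin.val_mk]
          omega
      · -- u = u_i, i ≤ n/2
        have hilt := i.isLt
        rcases x with b | k | k
        · -- x = u_b
          have hb := b.isLt
          set d := min (max i.val b.val - min i.val b.val)
            (n - (max i.val b.val - min i.val b.val)) with hd
          have hdn : d ≤ n / 2 := by omega
          by_cases h1 : d ≤ i.val
          · refine ⟨Sum.inl ⟨i.val - d, by omega⟩, memu _ _ (by omega), ?_⟩
            simp only [CFProof.cf_dist hn, CFProof.D, CFProof.cyc, Fin.val_mk]
            omega
          · by_cases hc2 : d ≤ i.val + (n / 2 - 1)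
            · refine ⟨Sum.inr (Sum.inl ⟨d - i.val - 1, by omega⟩), memv _, ?_⟩
              simp only [CFProof.cf_dist hn, CFProof.D, CFProof.cyc, Fin.val_mk]
              omega
            · refine ⟨Sum.inl ⟨d, by omega⟩, memu _ _ (by omega), ?_⟩
              simp only [CFProof.cf_dist hn, CFProof.D, CFProof.cyc, Fin.val_mk]
              omega
        · exact ⟨Sum.inr (Sum.inl k), memv k, rfl⟩
        · -- x = w_k
          have hk := k.isLt
          by_cases hi0 : i.val = 0
          · refine ⟨Sum.inl ⟨k.val + 2, by omega⟩, memu _ _ (by omega), ?_⟩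
            simp only [CFProof.cf_dist hn, CFProof.D, CFProof.cyc, Fin.val_mk]
            omega
          · by_cases hk0 : k.val = 0
            · refine ⟨Sum.inl ⟨0, by omega⟩, memu _ _ (by omega), ?_⟩
              simp only [CFProof.cf_dist hn, CFProof.D, CFProof.cyc, Fin.val_mk]
              omega
            · refine ⟨Sum.inr (Sum.inl ⟨k.val - 1, by omega⟩), memv _, ?_⟩
              simp only [CFProof.cf_dist hn, CFProof.D, CFProof.cyc, Fin.val_mk]
              omega
  · -- cardinality
    have hdisj : Disjoint
        (Set.range fun j : Fin (n / 2 - 1) => (Sum.inr (Sum.inl j) : CFV n))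
        {x : CFV n | ∃ i : Fin n, i.val ≤ n / 2 ∧ x = Sum.inl i} := by
      rw [Set.disjoint_left]
      rintro _ ⟨j, rfl⟩ ⟨i, hi, he⟩
      exact absurd he (by simp)
    rw [Set.ncard_union_eq hdisj (Set.toFinite _) (Set.toFinite _)]
    have hc1 : (Set.range fun j : Fin (n / 2 - 1) =>
        (Sum.inr (Sum.inl j) : CFV n)).ncard = n / 2 - 1 := by
      rw [← Set.image_univ, Set.ncard_image_of_injective _ (fun a b h => by simpa using h),
        Set.ncard_univ, Nat.card_eq_fintype_card, Fintype.card_fin]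
    have hc2 : ({x : CFV n | ∃ i : Fin n, i.val ≤ n / 2 ∧ x = Sum.inl i}).ncard = n / 2 + 1 := by
      have he : {x : CFV n | ∃ i : Fin n, i.val ≤ n / 2 ∧ x = Sum.inl i}
          = Set.range (fun i : Fin (n / 2 + 1) =>
              (Sum.inl (⟨i.val, by have := i.isLt; omega⟩ : Fin n) : CFV n)) := by
        ext x
        constructor
        · rintro ⟨i, hi, rfl⟩
          exact ⟨⟨i.val, by omega⟩, by simp⟩
        · rintro ⟨i, rfl⟩
          exact ⟨⟨i.val, by have := i.isLt; omega⟩, by simpa using Nat.lt_succ_iff.mp i.isLt, rfl⟩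
      rw [he, ← Set.image_univ,
        Set.ncard_image_of_injective _ (fun a b h => Fin.ext (by simpa using h)),
        Set.ncard_univ, Nat.card_eq_fintype_card, Fintype.card_fin]
    rw [hc1, hc2]
    omega
end
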